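/- Define on the TFG the candidate exponential exp_TFG(ξ^R, ξ^v, ξ^p, ξ^b) = (exp((ξ^R)×), ν(ξ^R)ξ^v, ν(ξ^R)ξ^p, ν(−ξ^R)ξ^b), where ν is the left Jacobian of SO(3). If ‖ξ^R‖ < π, then the map (R,v,p,b) ↦ (log(R), ν(log(R))⁻¹v, ν(log(R))⁻¹p, ν(−log(R))⁻¹b) is a two-sided inverse of exp_TFG on its image. -/

import Mathlib

open Matrix

noncomputable section

abbrev V3 := Fin 3 → ℝ
abbrev M3 := Matrix (Fin 3) (Fin 3) ℝ

/-- The skew-symmetric cross-product matrix `(ξ)×`. -/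
def skew (ξ : V3) : M3 :=
  !![0, -ξ 2, ξ 1; ξ 2, 0, -ξ 0; -ξ 1, ξ 0, 0]

/-- The Euclidean norm of a vector of `ℝ³`. -/
def nrm (ξ : V3) : ℝ := Real.sqrt (ξ 0 ^ 2 + ξ 1 ^ 2 + ξ 2 ^ 2)

/-- The left Jacobian of SO(3):
`ν(ξ) = I + ((1−cos‖ξ‖)/‖ξ‖²)(ξ)× + ((‖ξ‖−sin‖ξ‖)/‖ξ‖³)(ξ)ײ`. -/
def nu (ξ : V3) : M3 :=
  1 + ((1 - Real.cos (nrm ξ)) / nrm ξ ^ 2) • skew ξ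
    + ((nrm ξ - Real.sin (nrm ξ)) / nrm ξ ^ 3) • (skew ξ * skew ξ)

/-- An element of the Two-Frames Group: `(R, v, p, b)`. -/
abbrev TFGel := M3 × V3 × V3 × V3

/-- The candidate TFG exponential:
`exp_TFG(ξ^R, ξ^v, ξ^p, ξ^b) = (exp((ξ^R)×), ν(ξ^R)ξ^v, ν(ξ^R)ξ^p, ν(−ξ^R)ξ^b)`. -/
def expTFG (ξ : V3 × V3 × V3 × V3) : TFGel :=
  (NormedSpace.exp (skew ξ.1), nu ξ.1 *ᵥ ξ.2.1, nu ξ.1 *ᵥ ξ.2.2.1,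
    nu (-ξ.1) *ᵥ ξ.2.2.2)

lemma det_aux (x : V3) (c s : ℝ) :
    (1 + c • skew x + s • (skew x * skew x)).det =
      (1 - s * (x 0 ^ 2 + x 1 ^ 2 + x 2 ^ 2)) ^ 2
        + c ^ 2 * (x 0 ^ 2 + x 1 ^ 2 + x 2 ^ 2) := by
  simp [skew, Matrix.det_fin_three, Matrix.mul_apply, Fin.sum_univ_three,
    Matrix.one_apply]
  ring

lemma sq_nrm (x : V3) : nrm x ^ 2 = x 0 ^ 2 + x 1 ^ 2 + x 2 ^ 2 := by
  unfold nrm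
  rw [Real.sq_sqrt]
  positivity

lemma nrm_nonneg (x : V3) : 0 ≤ nrm x := Real.sqrt_nonneg _

lemma det_nu_ne_zero (x : V3) (hx : nrm x < Real.pi) : (nu x).det ≠ 0 := by
  have h := det_aux x ((1 - Real.cos (nrm x)) / nrm x ^ 2)
    ((nrm x - Real.sin (nrm x)) / nrm x ^ 3)
  rw [← sq_nrm] at h
  rw [nu, h]
  rcases eq_or_lt_of_le (nrm_nonneg x) with h0 | h0
  · rw [← h0]
    norm_num
  · have hs : Real.sin (nrm x) > 0 := Real.sin_pos_of_pos_of_lt_pi h0 hx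
    have key : 1 - (nrm x - Real.sin (nrm x)) / nrm x ^ 3 * nrm x ^ 2
        = Real.sin (nrm x) / nrm x := by
      field_simp
      ring
    rw [key]
    have h1 : Real.sin (nrm x) / nrm x > 0 := div_pos hs h0
    positivity

lemma nu_inv_mulVec (x : V3) (hx : nrm x < Real.pi) (v : V3) :
    (nu x)⁻¹ *ᵥ (nu x *ᵥ v) = v := by
  rw [Matrix.mulVec_mulVec,
    Matrix.nonsing_inv_mul _ (isUnit_iff_ne_zero.mpr (det_nu_ne_zero x hx)),
    Matrix.one_mulVec]

lemma nrm_neg (x : V3) : nrm (-x) = nrm x := by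
  simp [nrm]

/-- Given a logarithm `log` on SO(3), inverse of the rotation exponential for
angles `< π`, the map
`(R,v,p,b) ↦ (log R, ν(log R)⁻¹ v, ν(log R)⁻¹ p, ν(−log R)⁻¹ b)` is a two-sided
inverse of `exp_TFG` on the image of `{ξ : ‖ξ^R‖ < π}`. -/
theorem logTFG_two_sided_inverse (log : M3 → V3)
    (hlog : ∀ ξ : V3, nrm ξ < Real.pi → log (NormedSpace.exp (skew ξ)) = ξ)
    (logTFG : TFGel → V3 × V3 × V3 × V3)
    (hlogTFG : ∀ x : TFGel,
      logTFG x = (log x.1, (nu (log x.1))⁻¹ *ᵥ x.2.1, (nu (log x.1))⁻¹ *ᵥ x.2.2.1,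
        (nu (-log x.1))⁻¹ *ᵥ x.2.2.2)) :
    ∀ ξ : V3 × V3 × V3 × V3, nrm ξ.1 < Real.pi →
      logTFG (expTFG ξ) = ξ ∧ expTFG (logTFG (expTFG ξ)) = expTFG ξ := by
  intro ξ hξ
  have h1 : logTFG (expTFG ξ) = ξ := by
    rw [hlogTFG, expTFG]
    simp only [hlog ξ.1 hξ]
    have hneg : nrm (-ξ.1) < Real.pi := by rwa [nrm_neg]
    rw [nu_inv_mulVec ξ.1 hξ, nu_inv_mulVec ξ.1 hξ, nu_inv_mulVec (-ξ.1) hneg]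
  exact ⟨h1, by rw [h1]⟩
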